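/- Let $N\ge1$, $0<\theta\le2$, $p>1$ and $T>0$. Suppose a nonnegative measurable function $u$ on $\mathbb{R}^N\times(0,T)$ and a nonnegative Radon measure $\mu$ satisfy, for a.e. $x$ and all $0<t<T$, the integral equation $u(x,t)=\int_0^t\int G(x-y,t-s)d\mu(y)ds+\int_0^t\int G(x-y,t-s)u(y,s)^p dy\,ds<\infty$, where $G$ is the fractional heat kernel with lower bound $G(x,t)\ge c\,t^{-N/\theta}(1+t^{-1/\theta}|x|)^{-N-\theta}$ ($0<\theta<2$). Then $u\in L^p_{loc}(\mathbb{R}^N\times[0,T))$. -/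
import Mathlib


open MeasureTheory Set Real

theorem solution_locally_Lp (N : ℕ) (hN : 1 ≤ N) (θ p T c : ℝ)
    (hθ0 : 0 < θ) (hθ2 : θ < 2) (hp : 1 < p) (hT : 0 < T) (hc : 0 < c)
    (G : EuclideanSpace ℝ (Fin N) → ℝ → ℝ)
    (u : EuclideanSpace ℝ (Fin N) → ℝ → ℝ)
    (μ : Measure (EuclideanSpace ℝ (Fin N))) [IsFiniteMeasureOnCompacts μ]
    (hu : ∀ x t, 0 ≤ u x t)
    (hG0 : ∀ x t, 0 < t → 0 ≤ G x t)
    (hGlow : ∀ (x : EuclideanSpace ℝ (Fin N)) (t : ℝ), 0 < t →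
      c * t ^ (-(N : ℝ) / θ) * (1 + t ^ (-1 / θ) * ‖x‖) ^ (-(N : ℝ) - θ) ≤ G x t)
    (heq : ∀ t : ℝ, 0 < t → t < T → ∀ᵐ x : EuclideanSpace ℝ (Fin N),
      ENNReal.ofReal (u x t)
        = ∫⁻ s in Ioo 0 t,
            ((∫⁻ y, ENNReal.ofReal (G (x - y) (t - s)) ∂μ)
              + ∫⁻ y, ENNReal.ofReal (G (x - y) (t - s) * u y s ^ p))) :
    ∀ R : ℝ, 0 < R → ∀ t₀ : ℝ, 0 < t₀ → t₀ < T →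
      (∫⁻ t in Ioo 0 t₀,
          ∫⁻ x in Metric.ball (0 : EuclideanSpace ℝ (Fin N)) R,
            ENNReal.ofReal (u x t ^ p)) < ⊤ := by
  intro R hR t₀ ht₀ ht₀T
  set t : ℝ := (t₀ + T) / 2 with ht_def
  have ht₀t : t₀ < t := by rw [ht_def]; linarith
  have htT : t < T := by rw [ht_def]; linarith
  have ht : 0 < t := lt_trans ht₀ ht₀t
  obtain ⟨x, hx⟩ := (heq t ht htT).exists
  set M : ℝ := (t - t₀) ^ (-1 / θ) * (‖x‖ + R) with hM
  have hMnn : 0 ≤ M :=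
    mul_nonneg (Real.rpow_nonneg (by linarith) _) (by positivity)
  set ε : ℝ := c * t ^ (-(N : ℝ) / θ) * (1 + M) ^ (-(N : ℝ) - θ) with hε
  have hεpos : 0 < ε :=
    mul_pos (mul_pos hc (Real.rpow_pos_of_pos ht _))
      (Real.rpow_pos_of_pos (by linarith) _)
  -- key pointwise lower bound on G
  have key : ∀ s ∈ Ioo (0 : ℝ) t₀, ∀ y ∈ Metric.ball (0 : EuclideanSpace ℝ (Fin N)) R,
      ε ≤ G (x - y) (t - s) := by
    intro s hs y hy
    have hr0 : 0 < t - s := by linarith [hs.2]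
    have hrt : t - s ≤ t := by linarith [hs.1]
    have hrlow : t - t₀ ≤ t - s := by linarith [hs.2]
    have ht₀t' : (0 : ℝ) < t - t₀ := by linarith
    have hy' : ‖y‖ < R := by simpa [Metric.mem_ball, dist_eq_norm] using hy
    have hxy : ‖x - y‖ ≤ ‖x‖ + R := by
      have := norm_sub_le x y
      linarith
    have hexp : -(N : ℝ) / θ ≤ 0 := by
      rw [div_nonpos_iff]; right; exact ⟨neg_nonpos.2 (Nat.cast_nonneg N), hθ0.le⟩
    have h1 : t ^ (-(N : ℝ) / θ) ≤ (t - s) ^ (-(N : ℝ) / θ) :=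
      Real.rpow_le_rpow_of_nonpos hr0 hrt hexp
    have h2 : (t - s) ^ (-1 / θ) ≤ (t - t₀) ^ (-1 / θ) :=
      Real.rpow_le_rpow_of_nonpos ht₀t' hrlow
        (by rw [div_nonpos_iff]; right; exact ⟨by norm_num, hθ0.le⟩)
    have h3 : (t - s) ^ (-1 / θ) * ‖x - y‖ ≤ M :=
      mul_le_mul h2 hxy (norm_nonneg _) (Real.rpow_nonneg ht₀t'.le _)
    have h4 : (1 + M) ^ (-(N : ℝ) - θ) ≤
        (1 + (t - s) ^ (-1 / θ) * ‖x - y‖) ^ (-(N : ℝ) - θ) := by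
      have hbase : (0 : ℝ) < 1 + (t - s) ^ (-1 / θ) * ‖x - y‖ := by
        have : (0 : ℝ) ≤ (t - s) ^ (-1 / θ) * ‖x - y‖ :=
          mul_nonneg (Real.rpow_nonneg hr0.le _) (norm_nonneg _)
        linarith
      have hN0 : (0 : ℝ) ≤ N := Nat.cast_nonneg N
      exact Real.rpow_le_rpow_of_nonpos hbase (by linarith) (by linarith)
    calc ε ≤ c * (t - s) ^ (-(N : ℝ) / θ)
              * (1 + (t - s) ^ (-1 / θ) * ‖x - y‖) ^ (-(N : ℝ) - θ) := by
          apply mul_le_mul (mul_le_mul_of_nonneg_left h1 hc.le) h4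
            (Real.rpow_pos_of_pos (by linarith) _).le
          positivity
      _ ≤ G (x - y) (t - s) := hGlow _ _ hr0
  -- finiteness from the integral equation
  have hxfin : (∫⁻ s in Ioo 0 t,
      ∫⁻ y, ENNReal.ofReal (G (x - y) (t - s) * u y s ^ p)) < ⊤ := by
    calc (∫⁻ s in Ioo 0 t, ∫⁻ y, ENNReal.ofReal (G (x - y) (t - s) * u y s ^ p))
        ≤ ∫⁻ s in Ioo 0 t,
            ((∫⁻ y, ENNReal.ofReal (G (x - y) (t - s)) ∂μ)
              + ∫⁻ y, ENNReal.ofReal (G (x - y) (t - s) * u y s ^ p)) :=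
          lintegral_mono fun s => le_add_self
      _ = ENNReal.ofReal (u x t) := hx.symm
      _ < ⊤ := ENNReal.ofReal_lt_top
  have main : ENNReal.ofReal ε *
      (∫⁻ s in Ioo 0 t₀, ∫⁻ y in Metric.ball (0 : EuclideanSpace ℝ (Fin N)) R,
        ENNReal.ofReal (u y s ^ p))
      ≤ ∫⁻ s in Ioo 0 t, ∫⁻ y, ENNReal.ofReal (G (x - y) (t - s) * u y s ^ p) := by
    rw [← lintegral_const_mul' _ _ ENNReal.ofReal_ne_top]
    refine le_trans (setLIntegral_mono' measurableSet_Ioo fun s hs => ?_)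
      (lintegral_mono_set (Ioo_subset_Ioo le_rfl ht₀t.le))
    calc ENNReal.ofReal ε *
          ∫⁻ y in Metric.ball (0 : EuclideanSpace ℝ (Fin N)) R,
            ENNReal.ofReal (u y s ^ p)
        = ∫⁻ y in Metric.ball (0 : EuclideanSpace ℝ (Fin N)) R,
            ENNReal.ofReal (ε * u y s ^ p) := by
          rw [← lintegral_const_mul' _ _ ENNReal.ofReal_ne_top]
          congr 1
          ext y
          rw [ENNReal.ofReal_mul hεpos.le]
      _ ≤ ∫⁻ y in Metric.ball (0 : EuclideanSpace ℝ (Fin N)) R,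
            ENNReal.ofReal (G (x - y) (t - s) * u y s ^ p) := by
          refine setLIntegral_mono' measurableSet_ball fun y hy => ?_
          exact ENNReal.ofReal_le_ofReal
            (mul_le_mul_of_nonneg_right (key s hs y hy) (Real.rpow_nonneg (hu y s) _))
      _ ≤ ∫⁻ y, ENNReal.ofReal (G (x - y) (t - s) * u y s ^ p) :=
          setLIntegral_le_lintegral _ _
  by_contra hcon
  rw [not_lt, top_le_iff] at hcon
  rw [hcon, ENNReal.mul_top (by simpa using (ENNReal.ofReal_pos.2 hεpos).ne')] at main
  exact absurd (lt_of_le_of_lt main hxfin) (lt_irrefl ⊤)
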